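/- arXiv:2503.20567 — 2 statements merged into one kernel-verified Lean document; each statement's English description precedes it below -/
import Mathlib

section
/- The matrix X_n = B_n^{-1} A_n is lower Hessenberg plus a spike in the first column: X_n(i,j) = 0 whenever 2 ≤ j ≤ n and i ≥ j+2, and also whenever 1 ≤ i ≤ n-2 and j > i+2. -/
/-- a_i = -(i+α+1)(i+κ+1) -/
def acoef (α κ : ℝ) (i : ℕ) : ℝ := -(((i : ℝ) + α + 1) * ((i : ℝ) + κ + 1))

/-- b_i = i(2i+α+κ+1)+(i+α+1)(i+κ+1) -/
def bcoef (α κ : ℝ) (i : ℕ) : ℝ :=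
  (i : ℝ) * (2 * (i : ℝ) + α + κ + 1) + ((i : ℝ) + α + 1) * ((i : ℝ) + κ + 1)

/-- c_i = -i(3i+α+κ) -/
def ccoef (α κ : ℝ) (i : ℕ) : ℝ := -((i : ℝ) * (3 * (i : ℝ) + α + κ))

/-- d_i = (i-1)i -/
def dcoef (i : ℕ) : ℝ := ((i : ℝ) - 1) * (i : ℝ)

/-- The banded matrix `A_n` of the four-term recurrence: with 1-based
indices, `A_n(i,i) = b_{i-1}`, `A_n(i,i+1) = a_{i-1}`, `A_n(i+1,i) = c_i`,
`A_n(i+2,i) = d_{i+1}`.  Here `i : Fin n` is the 0-based index, so the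
coefficient index coincides with the 0-based row index. -/
def Amat (α κ : ℝ) (n : ℕ) : Matrix (Fin n) (Fin n) ℝ := fun i j =>
  if (i : ℕ) = (j : ℕ) then bcoef α κ i
  else if (j : ℕ) = (i : ℕ) + 1 then acoef α κ i
  else if (i : ℕ) = (j : ℕ) + 1 then ccoef α κ i
  else if (i : ℕ) = (j : ℕ) + 2 then dcoef i
  else 0

/-- The lower bidiagonal matrix `B_n` with diagonal entries
`e_{i-1} = i` (1-based) and subdiagonal entries `f_i = -i`. -/
def Bmat (n : ℕ) : Matrix (Fin n) (Fin n) ℝ := fun i j =>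
  if (i : ℕ) = (j : ℕ) then ((i : ℕ) : ℝ) + 1
  else if (i : ℕ) = (j : ℕ) + 1 then -((i : ℕ) : ℝ)
  else 0

/-- `X_n = B_n⁻¹ A_n`. -/
noncomputable def Xmat (α κ : ℝ) (n : ℕ) : Matrix (Fin n) (Fin n) ℝ :=
  (Bmat n)⁻¹ * Amat α κ n

/-- Explicit inverse of `Bmat`. -/
noncomputable def Binv (n : ℕ) : Matrix (Fin n) (Fin n) ℝ := fun i j =>
  if (j : ℕ) ≤ (i : ℕ) then 1 / ((i : ℕ) + 1) else 0

lemma Bmat_mul_Binv (n : ℕ) : Bmat n * Binv n = 1 := by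
  ext i j
  rw [Matrix.mul_apply, Matrix.one_apply]
  rcases Nat.eq_zero_or_pos (i : ℕ) with hi | hi
  · rw [Finset.sum_eq_single i]
    · simp only [Bmat, Binv, if_pos rfl, hi]
      rcases Nat.eq_zero_or_pos (j : ℕ) with hj | hj
      · have : i = j := Fin.ext (by omega)
        simp [this, hj]
      · have h1 : ¬ ((j:ℕ) ≤ 0) := by omega
        have h2 : i ≠ j := by intro h; rw [h] at hi; omega
        simp [h1, h2]
    · intro k _ hk
      have hk' : (i:ℕ) ≠ (k:ℕ) := fun h => hk (Fin.ext h.symm)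
      have hk2 : (i:ℕ) ≠ (k:ℕ) + 1 := by omega
      simp [Bmat, hk', hk2]
    · intro h; exact absurd (Finset.mem_univ i) h
  · have hin : (i:ℕ) - 1 < n := by omega
    set i' : Fin n := ⟨(i:ℕ) - 1, hin⟩ with hi'
    have hne : i' ≠ i := by
      intro h
      have := congrArg Fin.val h
      simp [hi'] at this; omega
    have hsub : ({i', i} : Finset (Fin n)) ⊆ Finset.univ := Finset.subset_univ _
    have hzero : ∀ k ∈ Finset.univ, k ∉ ({i', i} : Finset (Fin n)) →
        Bmat n i k * Binv n k j = 0 := by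
      intro k _ hk
      simp only [Finset.mem_insert, Finset.mem_singleton] at hk
      push_neg at hk
      have h1 : (i:ℕ) ≠ (k:ℕ) := by
        intro h; exact hk.2 (Fin.ext h.symm)
      have h2 : (i:ℕ) ≠ (k:ℕ) + 1 := by
        intro h
        exact hk.1 (Fin.ext (by simp [hi']; omega)).symm
      simp [Bmat, h1, h2]
    rw [← Finset.sum_subset hsub hzero, Finset.sum_pair hne]
    have hii' : (i:ℕ) ≠ (i':ℕ) := by simp [hi']; omega
    have hii'2 : (i:ℕ) = (i':ℕ) + 1 := by simp [hi']; omega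
    simp only [Bmat, Binv, if_pos rfl, if_neg hii', if_pos hii'2]
    have hcast : ((i':ℕ) : ℝ) + 1 = ((i:ℕ) : ℝ) := by
      have : (i':ℕ) + 1 = (i:ℕ) := by simp [hi']; omega
      exact_mod_cast congrArg (Nat.cast : ℕ → ℝ) this
    rcases lt_trichotomy (j:ℕ) (i:ℕ) with h | h | h
    · have hj1 : (j:ℕ) ≤ (i':ℕ) := by simp [hi']; omega
      have hj2 : (j:ℕ) ≤ (i:ℕ) := by omega
      have hij : i ≠ j := by intro hh; rw [hh] at h; omega
      have hi0 : ((i:ℕ):ℝ) ≠ 0 := Nat.cast_ne_zero.mpr (by omega)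
      rw [if_pos hj1, if_pos hj2, if_neg hij, hcast]
      field_simp
      simp only [↓reduceIte]; ring
    · have hj1 : ¬ ((j:ℕ) ≤ (i':ℕ)) := by simp [hi']; omega
      have hij : i = j := Fin.ext h.symm
      rw [if_neg hj1, if_pos h.le, if_pos hij]
      have : ((i:ℕ):ℝ) + 1 ≠ 0 := by positivity
      field_simp
      simp only [↓reduceIte]; ring
    · have hj1 : ¬ ((j:ℕ) ≤ (i':ℕ)) := by simp [hi']; omega
      have hj2 : ¬ ((j:ℕ) ≤ (i:ℕ)) := by omega
      have hij : i ≠ j := by intro hh; rw [hh] at h; omega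
      rw [if_neg hj1, if_neg hj2, if_neg hij]
      ring

lemma Binv_eq (n : ℕ) : (Bmat n)⁻¹ = Binv n :=
  Matrix.inv_eq_right_inv (Bmat_mul_Binv n)

lemma key_sum (α κ : ℝ) (j : ℕ) (hj : 1 ≤ j) :
    acoef α κ (j - 1) + bcoef α κ j + ccoef α κ (j + 1) + dcoef (j + 2) = 0 := by
  unfold acoef bcoef ccoef dcoef
  push_cast [Nat.cast_sub hj]
  ring

/-- `X_n` is tridiagonal plus a spike in the first column: using the
paper's 1-based indices `i = i₀+1`, `j = j₀+1`, `X_n(i,j) = 0` for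
`2 ≤ j` and `i ≥ j+2`, and for `j > i+2`. -/
theorem Xmat_structure (α κ : ℝ) (n : ℕ) :
    (∀ i j : Fin n, 1 ≤ (j : ℕ) → (j : ℕ) + 2 ≤ (i : ℕ) → Xmat α κ n i j = 0) ∧
    (∀ i j : Fin n, (i : ℕ) + 2 < (j : ℕ) → Xmat α κ n i j = 0) := by
  constructor
  · intro i j hj hij
    rw [Xmat, Binv_eq, Matrix.mul_apply]
    have hn := i.isLt
    set k1 : Fin n := ⟨(j:ℕ)-1, by omega⟩ with hk1
    set k3 : Fin n := ⟨(j:ℕ)+1, by omega⟩ with hk3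
    set k4 : Fin n := ⟨(j:ℕ)+2, by omega⟩ with hk4
    have hv1 : (k1:ℕ) = (j:ℕ)-1 := rfl
    have hv3 : (k3:ℕ) = (j:ℕ)+1 := rfl
    have hv4 : (k4:ℕ) = (j:ℕ)+2 := rfl
    have hsub : ({k1, j, k3, k4} : Finset (Fin n)) ⊆ Finset.univ := Finset.subset_univ _
    have hzero : ∀ k ∈ Finset.univ, k ∉ ({k1, j, k3, k4} : Finset (Fin n)) →
        Binv n i k * Amat α κ n k j = 0 := by
      intro k _ hk
      simp only [Finset.mem_insert, Finset.mem_singleton] at hk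
      push_neg at hk
      obtain ⟨h1, h2, h3, h4⟩ := hk
      have e1 : (k:ℕ) ≠ (j:ℕ) - 1 := fun h => h1 (Fin.ext (by rw [hv1]; exact h))
      have e2 : (k:ℕ) ≠ (j:ℕ) := fun h => h2 (Fin.ext h)
      have e3 : (k:ℕ) ≠ (j:ℕ) + 1 := fun h => h3 (Fin.ext (by rw [hv3]; exact h))
      have e4 : (k:ℕ) ≠ (j:ℕ) + 2 := fun h => h4 (Fin.ext (by rw [hv4]; exact h))
      have hA : Amat α κ n k j = 0 := by
        simp only [Amat]
        rw [if_neg e2, if_neg (by omega), if_neg (by omega), if_neg (by omega)]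
      rw [hA, mul_zero]
    rw [← Finset.sum_subset hsub hzero]
    have d12 : k1 ≠ j := by intro h; have := congrArg Fin.val h; rw [hv1] at this; omega
    have d13 : k1 ≠ k3 := by intro h; have := congrArg Fin.val h; rw [hv1, hv3] at this; omega
    have d14 : k1 ≠ k4 := by intro h; have := congrArg Fin.val h; rw [hv1, hv4] at this; omega
    have d23 : j ≠ k3 := by intro h; have := congrArg Fin.val h; rw [hv3] at this; omega
    have d24 : j ≠ k4 := by intro h; have := congrArg Fin.val h; rw [hv4] at this; omega
    have d34 : k3 ≠ k4 := by intro h; have := congrArg Fin.val h; rw [hv3, hv4] at this; omega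
    rw [Finset.sum_insert (by simp [d12, d13, d14]),
        Finset.sum_insert (by simp [d23, d24]),
        Finset.sum_insert (by simp [d34]), Finset.sum_singleton]
    have hB1 : Binv n i k1 = 1 / ((i:ℕ) + 1) := by
      simp only [Binv]; rw [if_pos (by omega)]
    have hB2 : Binv n i j = 1 / ((i:ℕ) + 1) := by
      simp only [Binv]; rw [if_pos (by omega)]
    have hB3 : Binv n i k3 = 1 / ((i:ℕ) + 1) := by
      simp only [Binv]; rw [if_pos (by omega)]
    have hB4 : Binv n i k4 = 1 / ((i:ℕ) + 1) := by
      simp only [Binv]; rw [if_pos (by omega)]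
    have hA1 : Amat α κ n k1 j = acoef α κ ((j:ℕ) - 1) := by
      simp only [Amat, hv1]; rw [if_neg (by omega), if_pos (by omega)]
    have hA2 : Amat α κ n j j = bcoef α κ (j:ℕ) := by
      simp [Amat]
    have hA3 : Amat α κ n k3 j = ccoef α κ ((j:ℕ) + 1) := by
      simp only [Amat, hv3]; rw [if_neg (by omega), if_neg (by omega)]; simp
    have hA4 : Amat α κ n k4 j = dcoef ((j:ℕ) + 2) := by
      simp only [Amat, hv4]
      rw [if_neg (by omega), if_neg (by omega), if_neg (by omega)]; simp
    rw [hB1, hB2, hB3, hB4, hA1, hA2, hA3, hA4]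
    have key := key_sum α κ (j:ℕ) hj
    linear_combination (1 / (((i:ℕ):ℝ) + 1)) * key
  · intro i j hij
    rw [Xmat, Binv_eq, Matrix.mul_apply]
    apply Finset.sum_eq_zero
    intro k _
    rcases le_or_gt (k:ℕ) (i:ℕ) with hk | hk
    · have hA : Amat α κ n k j = 0 := by
        simp only [Amat]
        rw [if_neg (by omega), if_neg (by omega), if_neg (by omega), if_neg (by omega)]
      rw [hA, mul_zero]
    · have hB : Binv n i k = 0 := by
        simp only [Binv]; rw [if_neg (by omega)]
      rw [hB, zero_mul]
end

section
/- The diagonal entries of X_n = B_n^{-1} A_n satisfy X_n(i,i) = 2i - 1 + α + κ for i = 2,…,n, and X_n(1,1) = (α+1)(κ+1). -/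
/-- Candidate inverse of `Bmat`. -/
noncomputable def Cmat (n : ℕ) : Matrix (Fin n) (Fin n) ℝ := fun i j =>
  if (j : ℕ) ≤ (i : ℕ) then 1 / (((i : ℕ) : ℝ) + 1) else 0

set_option maxRecDepth 8000

lemma Bmat_mul_Cmat (n : ℕ) : Bmat n * Cmat n = 1 := by
  ext i j
  rw [Matrix.mul_apply, Matrix.one_apply]
  rcases Nat.eq_zero_or_pos (i : ℕ) with h0 | hpos
  · rw [Finset.sum_eq_single i]
    · simp only [Bmat, Cmat, if_pos rfl, h0]
      rcases Nat.eq_zero_or_pos (j : ℕ) with hj0 | hjpos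
      · have : i = j := Fin.ext (by omega)
        simp [this, hj0]
      · have h1 : ¬ (j : ℕ) ≤ (0 : ℕ) := by omega
        have h2 : i ≠ j := fun h => by simp [h] at h0; omega
        simp [h0, h1, h2]
    · intro k _ hk
      have hk' : (i : ℕ) ≠ (k : ℕ) := fun h => hk (Fin.ext h.symm)
      have hk'' : (i : ℕ) ≠ (k : ℕ) + 1 := by omega
      simp [Bmat, hk', hk'']
    · intro h; exact absurd (Finset.mem_univ i) h
  · set i' : Fin n := ⟨(i : ℕ) - 1, by omega⟩ with hi'
    have hiv : (i' : ℕ) = (i : ℕ) - 1 := rfl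
    have hne : i' ≠ i := by
      intro h
      have := congrArg Fin.val h
      omega
    have hsum : ∑ k, Bmat n i k * Cmat n k j
        = ∑ k ∈ ({i', i} : Finset (Fin n)), Bmat n i k * Cmat n k j := by
      refine (Finset.sum_subset (Finset.subset_univ _) ?_).symm
      intro k _ hk
      simp only [Finset.mem_insert, Finset.mem_singleton] at hk
      push_neg at hk
      obtain ⟨h1, h2⟩ := hk
      have h1' : (k : ℕ) ≠ (i : ℕ) - 1 := fun h => h1 (Fin.ext h)
      have h2' : (i : ℕ) ≠ (k : ℕ) := fun h => h2 (Fin.ext h.symm)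
      have h3 : (i : ℕ) ≠ (k : ℕ) + 1 := by omega
      simp [Bmat, h2', h3]
    rw [hsum, Finset.sum_pair hne]
    have hB1 : Bmat n i i' = -((i : ℕ) : ℝ) := by
      have h1 : ¬ ((i : ℕ) = (i' : ℕ)) := by omega
      have h2 : (i : ℕ) = (i' : ℕ) + 1 := by omega
      simp only [Bmat, if_neg h1, if_pos h2]
    have hB2 : Bmat n i i = ((i : ℕ) : ℝ) + 1 := by simp [Bmat]
    rw [hB1, hB2]
    have hcast : (((i' : ℕ) : ℝ)) + 1 = ((i : ℕ) : ℝ) := by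
      rw [hiv]
      push_cast [Nat.cast_sub hpos]
      ring
    have hipos : (0 : ℝ) < ((i : ℕ) : ℝ) := by exact_mod_cast hpos
    rcases lt_trichotomy (j : ℕ) (i : ℕ) with hlt | heq | hgt
    · have c1 : (j : ℕ) ≤ (i' : ℕ) := by omega
      have c2 : (j : ℕ) ≤ (i : ℕ) := le_of_lt hlt
      have hne2 : i ≠ j := fun h => by simp [h] at hlt
      simp only [Cmat, if_pos c1, if_pos c2, if_neg hne2, hcast]
      field_simp
      ring
    · have hij : i = j := (Fin.ext heq).symm
      have c1 : ¬ (j : ℕ) ≤ (i' : ℕ) := by omega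
      have c2 : (j : ℕ) ≤ (i : ℕ) := le_of_eq heq
      simp only [Cmat, if_pos c2, if_neg c1, if_pos hij]
      have : ((i : ℕ) : ℝ) + 1 ≠ 0 := by positivity
      field_simp
      ring
    · have c1 : ¬ (j : ℕ) ≤ (i' : ℕ) := by omega
      have c2 : ¬ (j : ℕ) ≤ (i : ℕ) := by omega
      have hne2 : i ≠ j := fun h => by simp [h] at hgt
      simp [Cmat, c1, c2, hne2]

lemma Binv_s9 (n : ℕ) : (Bmat n)⁻¹ = Cmat n := Matrix.inv_eq_right_inv (Bmat_mul_Cmat n)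

/-- Diagonal entries (1-based): `X_n(i,i) = 2i-1+α+κ` for `i = 2,…,n`,
and `X_n(1,1) = (α+1)(κ+1)`. -/
theorem Xmat_diagonal (α κ : ℝ) (n : ℕ) (hn : 1 ≤ n) :
    (∀ i : ℕ, ∀ _h2 : 2 ≤ i, ∀ _hi : i ≤ n,
      Xmat α κ n ⟨i - 1, by omega⟩ ⟨i - 1, by omega⟩ = 2 * (i : ℝ) - 1 + α + κ) ∧
    Xmat α κ n ⟨0, by omega⟩ ⟨0, by omega⟩ = (α + 1) * (κ + 1) := by
  constructor
  · intro i h2 hi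
    set m : Fin n := ⟨i - 1, by omega⟩ with hm
    set m' : Fin n := ⟨i - 2, by omega⟩ with hm'
    have hmv : (m : ℕ) = i - 1 := rfl
    have hm'v : (m' : ℕ) = i - 2 := rfl
    have hne : m' ≠ m := by
      intro h
      have := congrArg Fin.val h
      omega
    rw [Xmat, Binv_s9, Matrix.mul_apply]
    have hsum : ∑ k, Cmat n m k * Amat α κ n k m
        = ∑ k ∈ ({m', m} : Finset (Fin n)), Cmat n m k * Amat α κ n k m := by
      refine (Finset.sum_subset (Finset.subset_univ _) ?_).symm
      intro k _ hk
      simp only [Finset.mem_insert, Finset.mem_singleton] at hk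
      push_neg at hk
      obtain ⟨h1, h2'⟩ := hk
      have h1' : (k : ℕ) ≠ i - 2 := fun h => h1 (Fin.ext h)
      have h2'' : (k : ℕ) ≠ i - 1 := fun h => h2' (Fin.ext h)
      rcases le_or_gt (k : ℕ) ((m : ℕ)) with hle | hgt
      · have a1 : (k : ℕ) ≠ (m : ℕ) := by omega
        have a2 : (m : ℕ) ≠ (k : ℕ) + 1 := by omega
        have a3 : (k : ℕ) ≠ (m : ℕ) + 1 := by omega
        have a4 : (k : ℕ) ≠ (m : ℕ) + 2 := by omega
        simp [Amat, a1, a2, a3, a4]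
      · have : ¬ (k : ℕ) ≤ (m : ℕ) := not_le.mpr hgt
        simp [Cmat, this]
    rw [hsum, Finset.sum_pair hne]
    have hC1 : Cmat n m m' = 1 / ((((i - 1 : ℕ)) : ℝ) + 1) := by
      have h : (m' : ℕ) ≤ (m : ℕ) := by omega
      simp only [Cmat, if_pos h, hmv]
      have h' : (m' : ℕ) ≤ i - 1 := by omega
      rw [if_pos h']
    have hC2 : Cmat n m m = 1 / ((((i - 1 : ℕ)) : ℝ) + 1) := by
      simp only [Cmat, if_pos le_rfl, hmv]
    have hA1 : Amat α κ n m' m = acoef α κ (i - 2) := by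
      have a1 : ¬ (m' : ℕ) = (m : ℕ) := by omega
      have a2 : (m : ℕ) = (m' : ℕ) + 1 := by omega
      simp only [Amat, if_neg a1, if_pos a2, hm'v]
      have b1 : ¬ (i - 2 = (m : ℕ)) := by omega
      have b2 : (m : ℕ) = i - 2 + 1 := by omega
      rw [if_neg b1, if_pos b2]
    have hA2 : Amat α κ n m m = bcoef α κ (i - 1) := by
      simp only [Amat, if_pos rfl, hmv]
      simp
    rw [hC1, hC2, hA1, hA2]
    have hc1 : ((i - 1 : ℕ) : ℝ) = (i : ℝ) - 1 := by
      push_cast [Nat.cast_sub (by omega : 1 ≤ i)]; ring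
    have hc2 : ((i - 2 : ℕ) : ℝ) = (i : ℝ) - 2 := by
      push_cast [Nat.cast_sub (by omega : 2 ≤ i)]; ring
    rw [acoef, bcoef, hc1, hc2]
    have hipos : (0 : ℝ) < (i : ℝ) := by exact_mod_cast (by omega : 0 < i)
    have hine : (i : ℝ) - 1 + 1 ≠ 0 := by rw [sub_add_cancel]; exact ne_of_gt hipos
    field_simp
    ring
  · rw [Xmat, Binv_s9, Matrix.mul_apply]
    rw [Finset.sum_eq_single (⟨0, by omega⟩ : Fin n)]
    · simp [Cmat, Amat, bcoef]
    · intro k _ hk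
      have hk' : (k : ℕ) ≠ 0 := fun h => hk (Fin.ext h)
      have : ¬ (k : ℕ) ≤ 0 := by omega
      simp [Cmat, this]
    · intro h; exact absurd (Finset.mem_univ _) h
end
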